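/- arXiv:1210.1142 — 3 statements merged into one kernel-verified Lean document; each statement's English description precedes it below -/
import Mathlib

section
/- For a Hopf algebra H with twist F = fᵅ⊗f_ᵅ, the element χ := fᵅ S(f_ᵅ) is invertible with inverse χ⁻¹ = S(f̄ᵅ) f̄_ᵅ, where F⁻¹ = f̄ᵅ⊗f̄_ᵅ. -/
open TensorProduct LinearMap
set_option synthInstance.maxHeartbeats 1000000
set_option maxHeartbeats 1000000

variable (K : Type*) [CommRing K] (H : Type*) [Ring H] [HopfAlgebra K H]

/-- The deformed coproduct `Δ^F(ξ) = F * Δ(ξ) * F⁻¹`. -/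
noncomputable def comulF (F Finv : H ⊗[K] H) : H →ₗ[K] H ⊗[K] H :=
  (mulRight K Finv) ∘ₗ (mulLeft K F) ∘ₗ (Coalgebra.comul (R := K))

/-- `F` is a twist with respect to the coproduct `Δ` and counit `ε`:
the 2-cocycle condition `F₁₂ (Δ⊗id)(F) = F₂₃ (id⊗Δ)(F)` (compared in `H ⊗ (H ⊗ H)`
via the associator) and the normalization `(ε⊗id)(F) = 1 = (id⊗ε)(F)`. -/
noncomputable def IsTwist (Δ : H →ₗ[K] H ⊗[K] H) (ε : H →ₗ[K] K) (F : H ⊗[K] H) : Prop :=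
  (Algebra.TensorProduct.assoc K K K H H H (F ⊗ₜ[K] (1:H)))
      * (Algebra.TensorProduct.assoc K K K H H H (TensorProduct.map Δ LinearMap.id F))
    = ((1:H) ⊗ₜ[K] F) * (TensorProduct.map LinearMap.id Δ F)
  ∧ TensorProduct.lid K H (TensorProduct.map ε LinearMap.id F) = 1
  ∧ TensorProduct.rid K H (TensorProduct.map LinearMap.id ε F) = 1

/-- `χ = fᵅ S(f_ᵅ) = μ∘(id⊗S)(F)`. -/
noncomputable def chiF (F : H ⊗[K] H) : H :=
  LinearMap.mul' K H
    (TensorProduct.map LinearMap.id (HopfAlgebra.antipode (R := K)) F)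

/-- `χ⁻¹ = S(f̄ᵅ) f̄_ᵅ = μ∘(S⊗id)(F⁻¹)`. -/
noncomputable def chiFinv (Finv : H ⊗[K] H) : H :=
  LinearMap.mul' K H
    (TensorProduct.map (HopfAlgebra.antipode (R := K)) LinearMap.id Finv)

noncomputable def twMS : H ⊗[K] H →ₗ[K] H :=
  mul' K H ∘ₗ TensorProduct.map (HopfAlgebra.antipode (R := K)) LinearMap.id

noncomputable def twMS' : H ⊗[K] H →ₗ[K] H :=
  mul' K H ∘ₗ TensorProduct.map LinearMap.id (HopfAlgebra.antipode (R := K))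

@[simp] lemma twMS_tmul (a b : H) :
    twMS K H (a ⊗ₜ[K] b) = HopfAlgebra.antipode (R := K) a * b := rfl

@[simp] lemma twMS'_tmul (a b : H) :
    twMS' K H (a ⊗ₜ[K] b) = a * HopfAlgebra.antipode (R := K) b := rfl

@[simp] lemma twMS_comul (a : H) :
    twMS K H (Coalgebra.comul a) = algebraMap K H (Coalgebra.counit a) := by
  simpa [twMS, LinearMap.rTensor] using HopfAlgebra.mul_antipode_rTensor_comul_apply (R := K) a

@[simp] lemma twMS'_comul (a : H) :
    twMS' K H (Coalgebra.comul a) = algebraMap K H (Coalgebra.counit a) := by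
  simpa [twMS', LinearMap.lTensor] using HopfAlgebra.mul_antipode_lTensor_comul_apply (R := K) a

lemma tw_antipode_one : HopfAlgebra.antipode (R := K) (1 : H) = 1 := by
  have h := HopfAlgebra.mul_antipode_lTensor_comul_apply (R := K) (1 : H)
  simpa [Algebra.TensorProduct.one_def] using h

/-- `T5 = H⊗(H⊗(H⊗(H⊗H)))` insertion of the first factor: `p⊗(q⊗r) ↦ p⊗(q⊗(1⊗(1⊗r)))`. -/
noncomputable def twE1 : H ⊗[K] (H ⊗[K] H) →ₗ[K] H ⊗[K] (H ⊗[K] (H ⊗[K] (H ⊗[K] H))) :=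
  lTensor H (lTensor H ((TensorProduct.mk K H (H ⊗[K] H) 1) ∘ₗ (TensorProduct.mk K H H 1)))

/-- insertion of the second factor: `u⊗(v⊗w) ↦ u⊗(1⊗(v⊗(w⊗1)))`. -/
noncomputable def twE2 : H ⊗[K] (H ⊗[K] H) →ₗ[K] H ⊗[K] (H ⊗[K] (H ⊗[K] (H ⊗[K] H))) :=
  lTensor H ((TensorProduct.mk K H (H ⊗[K] (H ⊗[K] H)) 1) ∘ₗ
    lTensor H ((TensorProduct.mk K H H).flip 1))

@[simp] lemma twE1_tmul (p q r : H) :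
    twE1 K H (p ⊗ₜ[K] (q ⊗ₜ[K] r)) = p ⊗ₜ[K] (q ⊗ₜ[K] ((1:H) ⊗ₜ[K] ((1:H) ⊗ₜ[K] r))) := rfl

@[simp] lemma twE2_tmul (u v w : H) :
    twE2 K H (u ⊗ₜ[K] (v ⊗ₜ[K] w)) = u ⊗ₜ[K] ((1:H) ⊗ₜ[K] (v ⊗ₜ[K] (w ⊗ₜ[K] (1:H)))) := rfl

/-- `α⊗(β⊗(γ⊗(δ⊗ζ))) ↦ S α * (β * (γ * (S δ * S ζ)))`. -/
noncomputable def twL5 : H ⊗[K] (H ⊗[K] (H ⊗[K] (H ⊗[K] H))) →ₗ[K] H :=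
  mul' K H ∘ₗ TensorProduct.map (HopfAlgebra.antipode (R := K))
    (mul' K H ∘ₗ TensorProduct.map LinearMap.id
      (mul' K H ∘ₗ TensorProduct.map LinearMap.id
        (mul' K H ∘ₗ TensorProduct.map (HopfAlgebra.antipode (R := K))
          (HopfAlgebra.antipode (R := K)))))

@[simp] lemma twL5_tmul (a b c d e : H) :
    twL5 K H (a ⊗ₜ[K] (b ⊗ₜ[K] (c ⊗ₜ[K] (d ⊗ₜ[K] e)))) =
      HopfAlgebra.antipode (R := K) a * (b * (c *
        (HopfAlgebra.antipode (R := K) d * HopfAlgebra.antipode (R := K) e))) := rfl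

section
@[reducible] noncomputable def twR3 : Ring (H ⊗[K] (H ⊗[K] H)) := inferInstance
attribute [local instance] twR3
@[reducible] noncomputable def twA3 : Algebra K (H ⊗[K] (H ⊗[K] H)) := inferInstance
attribute [local instance] twA3
@[reducible] noncomputable def twR4 : Ring (H ⊗[K] (H ⊗[K] (H ⊗[K] H))) := inferInstance
attribute [local instance] twR4
@[reducible] noncomputable def twA4 : Algebra K (H ⊗[K] (H ⊗[K] (H ⊗[K] H))) := inferInstance
attribute [local instance] twA4
@[reducible] noncomputable def twR5 : Ring (H ⊗[K] (H ⊗[K] (H ⊗[K] (H ⊗[K] H)))) := inferInstance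
attribute [local instance] twR5

lemma twC1 (e f : H ⊗[K] H) (r w : H) :
    twL5 K H (twE1 K H (Algebra.TensorProduct.assoc K K K H H H (e ⊗ₜ[K] r))
        * twE2 K H (Algebra.TensorProduct.assoc K K K H H H (f ⊗ₜ[K] w)))
      = twMS K H (e * f) *
        (HopfAlgebra.antipode (R := K) w * HopfAlgebra.antipode (R := K) r) := by
  induction e using TensorProduct.induction_on with
  | zero => simp
  | add x y hx hy =>
      simp only [add_tmul, map_add, add_mul, hx, hy]
  | tmul p q =>
    induction f using TensorProduct.induction_on with
    | zero => simp
    | add x y hx hy =>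
        simp only [add_tmul, map_add, mul_add, add_mul, hx, hy]
    | tmul u v =>
        simp only [Algebra.TensorProduct.assoc_tmul, twE1_tmul, twE2_tmul,
          Algebra.TensorProduct.tmul_mul_tmul, twL5_tmul, twMS_tmul,
          one_mul, mul_one]
        noncomm_ring

lemma twC2 (e f : H ⊗[K] H) (p u : H) :
    twL5 K H (twE1 K H (p ⊗ₜ[K] e) * twE2 K H (u ⊗ₜ[K] f))
      = HopfAlgebra.antipode (R := K) (p * u) *
        mul' K H (TensorProduct.map LinearMap.id
          (mulLeft K (twMS' K H f) ∘ₗ HopfAlgebra.antipode (R := K)) e) := by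
  induction e using TensorProduct.induction_on with
  | zero => simp
  | add x y hx hy => simp only [tmul_add, map_add, add_mul, mul_add, hx, hy]
  | tmul q r =>
    simp only [map_tmul, mul'_apply, LinearMap.id_coe, id_eq, coe_comp, Function.comp_apply,
      mulLeft_apply]
    induction f using TensorProduct.induction_on with
    | zero => simp
    | add x y hx hy =>
        simp only [tmul_add, map_add, add_mul, mul_add, hx, hy]
    | tmul v w =>
        simp only [twE1_tmul, twE2_tmul, Algebra.TensorProduct.tmul_mul_tmul, twL5_tmul,
          twMS'_tmul, one_mul, mul_one]
        noncomm_ring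

lemma twA1 (za zb : H ⊗[K] H) :
    twL5 K H (twE1 K H (Algebra.TensorProduct.assoc K K K H H H
          (rTensor H (Coalgebra.comul (R := K)) za))
        * twE2 K H (Algebra.TensorProduct.assoc K K K H H H
          (rTensor H (Coalgebra.comul (R := K)) zb)))
      = HopfAlgebra.antipode (R := K)
          (TensorProduct.lid K H (rTensor H (Coalgebra.counit (R := K)) zb)) *
        HopfAlgebra.antipode (R := K)
          (TensorProduct.lid K H (rTensor H (Coalgebra.counit (R := K)) za)) := by
  induction za using TensorProduct.induction_on with
  | zero => simp
  | add x y hx hy => simp only [map_add, add_mul, mul_add, hx, hy]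
  | tmul t r =>
    induction zb using TensorProduct.induction_on with
    | zero => simp
    | add x y hx hy => simp only [map_add, add_mul, mul_add, hx, hy]
    | tmul s w =>
      simp only [rTensor_tmul, twC1, TensorProduct.lid_tmul, map_smul,
        smul_mul_assoc, mul_smul_comm]
      rw [← Bialgebra.comul_mul, twMS_comul, Bialgebra.counit_mul, ← Algebra.smul_def,
        smul_smul, mul_comm (Coalgebra.counit (R := K) t)]

lemma twScal (c : K) (z : H ⊗[K] H) :
    mul' K H (TensorProduct.map LinearMap.id
        (mulLeft K (algebraMap K H c) ∘ₗ HopfAlgebra.antipode (R := K)) z)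
      = c • twMS' K H z := by
  induction z using TensorProduct.induction_on with
  | zero => simp
  | add x y hx hy => simp only [map_add, smul_add, hx, hy]
  | tmul q r =>
    simp only [map_tmul, mul'_apply, LinearMap.id_coe, id_eq, coe_comp, Function.comp_apply,
      mulLeft_apply, twMS'_tmul, ← Algebra.smul_def, mul_smul_comm]

lemma twA2 (za zb : H ⊗[K] H) :
    twL5 K H (twE1 K H (lTensor H (Coalgebra.comul (R := K)) za)
        * twE2 K H (lTensor H (Coalgebra.comul (R := K)) zb))
      = HopfAlgebra.antipode (R := K)
          (TensorProduct.rid K H (lTensor H (Coalgebra.counit (R := K)) za) *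
           TensorProduct.rid K H (lTensor H (Coalgebra.counit (R := K)) zb)) := by
  induction za using TensorProduct.induction_on with
  | zero => simp
  | add x y hx hy => simp only [map_add, add_mul, mul_add, hx, hy]
  | tmul p t =>
    induction zb using TensorProduct.induction_on with
    | zero => simp
    | add x y hx hy => simp only [map_add, add_mul, mul_add, hx, hy]
    | tmul u s =>
      simp only [lTensor_tmul, twC2, twScal, twMS'_comul, TensorProduct.rid_tmul]
      rw [mul_smul_comm, ← Algebra.commutes, ← Algebra.smul_def]
      rw [smul_mul_assoc, mul_smul_comm, map_smul, map_smul, smul_smul, smul_smul,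
        mul_comm (Coalgebra.counit (R := K) s)]

lemma twAssocEq (v : (H ⊗[K] H) ⊗[K] H) :
    Algebra.TensorProduct.assoc K K K H H H v = TensorProduct.assoc K H H H v := by
  induction v using TensorProduct.induction_on with
  | zero => simp
  | add x y hx hy => simp [hx, hy]
  | tmul xy c =>
    induction xy using TensorProduct.induction_on with
    | zero => simp [zero_tmul]
    | add x y hx hy => simp only [add_tmul, map_add, hx, hy]
    | tmul a b => simp

lemma tw_antipode_mul (a b : H) :
    HopfAlgebra.antipode (R := K) (a * b) =
      HopfAlgebra.antipode (R := K) b * HopfAlgebra.antipode (R := K) a := by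
  have h2 := twA2 K H (Coalgebra.comul (R := K) a) (Coalgebra.comul (R := K) b)
  have h1 := twA1 K H (Coalgebra.comul (R := K) a) (Coalgebra.comul (R := K) b)
  simp only [Coalgebra.lTensor_counit_comul, TensorProduct.rid_tmul, one_smul] at h2
  simp only [Coalgebra.rTensor_counit_comul, TensorProduct.lid_tmul, one_smul] at h1
  rw [← h2]
  rw [← h1]
  congr 2
  · rw [twAssocEq, Coalgebra.coassoc_apply]
  · rw [twAssocEq, Coalgebra.coassoc_apply]

/-- `a⊗(b⊗c) ↦ a * (S b * c)`. -/
noncomputable def twPhi : H ⊗[K] (H ⊗[K] H) →ₗ[K] H :=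
  mul' K H ∘ₗ TensorProduct.map LinearMap.id (twMS K H)

/-- `a⊗(b⊗c) ↦ S a * (b * S c)`. -/
noncomputable def twPsi : H ⊗[K] (H ⊗[K] H) →ₗ[K] H :=
  mul' K H ∘ₗ TensorProduct.map (HopfAlgebra.antipode (R := K)) (twMS' K H)

@[simp] lemma twPhi_tmul (a b c : H) :
    twPhi K H (a ⊗ₜ[K] (b ⊗ₜ[K] c)) = a * (HopfAlgebra.antipode (R := K) b * c) := rfl

@[simp] lemma twPsi_tmul (a b c : H) :
    twPsi K H (a ⊗ₜ[K] (b ⊗ₜ[K] c)) =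
      HopfAlgebra.antipode (R := K) a * (b * HopfAlgebra.antipode (R := K) c) := rfl

lemma twStep1 (a d : H) (u w : H ⊗[K] H) :
    twPhi K H ((a ⊗ₜ[K] u) * (Algebra.TensorProduct.assoc K K K H H H (w ⊗ₜ[K] d)))
      = a * (twMS' K H w * (twMS K H u * d)) := by
  induction u using TensorProduct.induction_on with
  | zero => simp
  | add x y hx hy => simp only [tmul_add, map_add, add_mul, mul_add, hx, hy]
  | tmul p q =>
    induction w using TensorProduct.induction_on with
    | zero => simp
    | add x y hx hy => simp only [add_tmul, map_add, add_mul, mul_add, hx, hy]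
    | tmul r s =>
      simp only [Algebra.TensorProduct.assoc_tmul, Algebra.TensorProduct.tmul_mul_tmul,
        twPhi_tmul, twMS_tmul, twMS'_tmul, tw_antipode_mul]
      noncomm_ring

lemma twStep2 (b c : H) (u w : H ⊗[K] H) :
    twPsi K H ((Algebra.TensorProduct.assoc K K K H H H (u ⊗ₜ[K] b)) * (c ⊗ₜ[K] w))
      = HopfAlgebra.antipode (R := K) c *
        (twMS K H u * (twMS' K H w * HopfAlgebra.antipode (R := K) b)) := by
  induction u using TensorProduct.induction_on with
  | zero => simp
  | add x y hx hy => simp only [add_tmul, map_add, add_mul, mul_add, hx, hy]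
  | tmul p q =>
    induction w using TensorProduct.induction_on with
    | zero => simp
    | add x y hx hy => simp only [tmul_add, map_add, add_mul, mul_add, hx, hy]
    | tmul r s =>
      simp only [Algebra.TensorProduct.assoc_tmul, Algebra.TensorProduct.tmul_mul_tmul,
        twPsi_tmul, twMS_tmul, twMS'_tmul, tw_antipode_mul]
      noncomm_ring

lemma twLemA (x y : H ⊗[K] H) :
    twPhi K H ((TensorProduct.map LinearMap.id (Coalgebra.comul (R := K)) x)
        * (Algebra.TensorProduct.assoc K K K H H H
            (TensorProduct.map (Coalgebra.comul (R := K)) LinearMap.id y)))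
      = TensorProduct.rid K H (TensorProduct.map LinearMap.id (Coalgebra.counit (R := K)) x)
        * TensorProduct.lid K H
            (TensorProduct.map (Coalgebra.counit (R := K)) LinearMap.id y) := by
  induction x using TensorProduct.induction_on with
  | zero => simp
  | add x y hx hy => simp only [map_add, add_mul, mul_add, hx, hy]
  | tmul a b =>
    induction y using TensorProduct.induction_on with
    | zero => simp
    | add x y hx hy => simp only [map_add, add_mul, mul_add, hx, hy]
    | tmul c d =>
      simp only [map_tmul, LinearMap.id_coe, id_eq, twStep1, twMS_comul, twMS'_comul,
        TensorProduct.rid_tmul, TensorProduct.lid_tmul]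
      rw [← Algebra.smul_def, ← Algebra.smul_def, smul_mul_assoc, mul_smul_comm,
        mul_smul_comm, mul_smul_comm, smul_smul, smul_smul,
        mul_comm (Coalgebra.counit (R := K) b)]

lemma twLemB (x y : H ⊗[K] H) :
    twPsi K H ((Algebra.TensorProduct.assoc K K K H H H
          (TensorProduct.map (Coalgebra.comul (R := K)) LinearMap.id x))
        * (TensorProduct.map LinearMap.id (Coalgebra.comul (R := K)) y))
      = HopfAlgebra.antipode (R := K)
          (TensorProduct.rid K H (TensorProduct.map LinearMap.id (Coalgebra.counit (R := K)) y))
        * HopfAlgebra.antipode (R := K)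
            (TensorProduct.lid K H
              (TensorProduct.map (Coalgebra.counit (R := K)) LinearMap.id x)) := by
  induction x using TensorProduct.induction_on with
  | zero => simp
  | add x y hx hy => simp only [map_add, add_mul, mul_add, hx, hy]
  | tmul a b =>
    induction y using TensorProduct.induction_on with
    | zero => simp
    | add x y hx hy => simp only [map_add, add_mul, mul_add, hx, hy]
    | tmul c d =>
      simp only [map_tmul, LinearMap.id_coe, id_eq, twStep2, twMS_comul, twMS'_comul,
        TensorProduct.rid_tmul, TensorProduct.lid_tmul, map_smul]
      rw [← Algebra.smul_def, ← Algebra.smul_def, smul_mul_assoc, mul_smul_comm,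
        mul_smul_comm, mul_smul_comm, smul_smul, smul_smul,
        mul_comm (Coalgebra.counit (R := K) a)]

end

/-- for a Hopf algebra `H` with twist `F`, the element `χ = fᵅ S(f_ᵅ)` is
invertible with inverse `χ⁻¹ = S(f̄ᵅ) f̄_ᵅ`. -/
theorem chiF_invertible (F Finv : H ⊗[K] H) (hF : F * Finv = 1) (hF' : Finv * F = 1)
    (htw : IsTwist K H (Coalgebra.comul (R := K)) (Coalgebra.counit (R := K)) F) :
    chiF K H F * chiFinv K H Finv = 1 ∧ chiFinv K H Finv * chiF K H F = 1 := by
  obtain ⟨hcoc, hn1, hn2⟩ := htw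
  have hMc : ∀ z : H ⊗[K] H,
      (Algebra.TensorProduct.map (Bialgebra.comulAlgHom K H) (AlgHom.id K H)) z
        = TensorProduct.map (Coalgebra.comul (R := K)) LinearMap.id z := by
    intro z
    induction z using TensorProduct.induction_on with
    | zero => simp
    | add x y hx hy => simp [hx, hy]
    | tmul a b => simp
  have hMd : ∀ z : H ⊗[K] H,
      (Algebra.TensorProduct.map (AlgHom.id K H) (Bialgebra.comulAlgHom K H)) z
        = TensorProduct.map LinearMap.id (Coalgebra.comul (R := K)) z := by
    intro z
    induction z using TensorProduct.induction_on with
    | zero => simp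
    | add x y hx hy => simp [hx, hy]
    | tmul a b => simp
  have hB : (Algebra.TensorProduct.assoc K K K H H H
        (TensorProduct.map (Coalgebra.comul (R := K)) LinearMap.id F))
      * (Algebra.TensorProduct.assoc K K K H H H
        (TensorProduct.map (Coalgebra.comul (R := K)) LinearMap.id Finv)) = 1 := by
    rw [← hMc, ← hMc, ← map_mul, ← map_mul, hF, map_one, map_one]
  have hD : (TensorProduct.map LinearMap.id (Coalgebra.comul (R := K)) F)
      * (TensorProduct.map LinearMap.id (Coalgebra.comul (R := K)) Finv) = 1 := by
    rw [← hMd, ← hMd, ← map_mul, hF, map_one]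
  have hOne : ((1:H) ⊗ₜ[K] Finv) * ((1:H) ⊗ₜ[K] F) = 1 := by
    rw [Algebra.TensorProduct.tmul_mul_tmul, one_mul, hF',
      ← Algebra.TensorProduct.one_def]
  have hA1 : (Algebra.TensorProduct.assoc K K K H H H (Finv ⊗ₜ[K] (1:H)))
      * (Algebra.TensorProduct.assoc K K K H H H (F ⊗ₜ[K] (1:H))) = 1 := by
    rw [← map_mul, Algebra.TensorProduct.tmul_mul_tmul, hF', one_mul,
      ← Algebra.TensorProduct.one_def, map_one]
  have hE1 : ((1:H) ⊗ₜ[K] Finv) * (Algebra.TensorProduct.assoc K K K H H H (F ⊗ₜ[K] (1:H)))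
      = (TensorProduct.map LinearMap.id (Coalgebra.comul (R := K)) F)
        * (Algebra.TensorProduct.assoc K K K H H H
            (TensorProduct.map (Coalgebra.comul (R := K)) LinearMap.id Finv)) := by
    calc ((1:H) ⊗ₜ[K] Finv) * (Algebra.TensorProduct.assoc K K K H H H (F ⊗ₜ[K] (1:H)))
        = ((1:H) ⊗ₜ[K] Finv) * (Algebra.TensorProduct.assoc K K K H H H (F ⊗ₜ[K] (1:H)))
          * ((Algebra.TensorProduct.assoc K K K H H H
              (TensorProduct.map (Coalgebra.comul (R := K)) LinearMap.id F))
            * (Algebra.TensorProduct.assoc K K K H H H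
              (TensorProduct.map (Coalgebra.comul (R := K)) LinearMap.id Finv))) := by
          rw [hB, mul_one]
      _ = ((1:H) ⊗ₜ[K] Finv) * ((Algebra.TensorProduct.assoc K K K H H H (F ⊗ₜ[K] (1:H)))
            * (Algebra.TensorProduct.assoc K K K H H H
              (TensorProduct.map (Coalgebra.comul (R := K)) LinearMap.id F)))
          * (Algebra.TensorProduct.assoc K K K H H H
              (TensorProduct.map (Coalgebra.comul (R := K)) LinearMap.id Finv)) := by
          noncomm_ring
      _ = ((1:H) ⊗ₜ[K] Finv) * (((1:H) ⊗ₜ[K] F)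
            * (TensorProduct.map LinearMap.id (Coalgebra.comul (R := K)) F))
          * (Algebra.TensorProduct.assoc K K K H H H
              (TensorProduct.map (Coalgebra.comul (R := K)) LinearMap.id Finv)) := by
          rw [hcoc]
      _ = (((1:H) ⊗ₜ[K] Finv) * ((1:H) ⊗ₜ[K] F))
          * ((TensorProduct.map LinearMap.id (Coalgebra.comul (R := K)) F)
            * (Algebra.TensorProduct.assoc K K K H H H
              (TensorProduct.map (Coalgebra.comul (R := K)) LinearMap.id Finv))) := by
          noncomm_ring
      _ = _ := by rw [hOne, one_mul]
  have hE2 : (Algebra.TensorProduct.assoc K K K H H H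
        (TensorProduct.map (Coalgebra.comul (R := K)) LinearMap.id F))
      * (TensorProduct.map LinearMap.id (Coalgebra.comul (R := K)) Finv)
      = (Algebra.TensorProduct.assoc K K K H H H (Finv ⊗ₜ[K] (1:H))) * ((1:H) ⊗ₜ[K] F) := by
    calc (Algebra.TensorProduct.assoc K K K H H H
          (TensorProduct.map (Coalgebra.comul (R := K)) LinearMap.id F))
        * (TensorProduct.map LinearMap.id (Coalgebra.comul (R := K)) Finv)
        = ((Algebra.TensorProduct.assoc K K K H H H (Finv ⊗ₜ[K] (1:H)))
            * (Algebra.TensorProduct.assoc K K K H H H (F ⊗ₜ[K] (1:H))))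
          * ((Algebra.TensorProduct.assoc K K K H H H
              (TensorProduct.map (Coalgebra.comul (R := K)) LinearMap.id F))
            * (TensorProduct.map LinearMap.id (Coalgebra.comul (R := K)) Finv)) := by
          rw [hA1, one_mul]
      _ = (Algebra.TensorProduct.assoc K K K H H H (Finv ⊗ₜ[K] (1:H)))
          * (((Algebra.TensorProduct.assoc K K K H H H (F ⊗ₜ[K] (1:H)))
            * (Algebra.TensorProduct.assoc K K K H H H
              (TensorProduct.map (Coalgebra.comul (R := K)) LinearMap.id F)))
            * (TensorProduct.map LinearMap.id (Coalgebra.comul (R := K)) Finv)) := by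
          noncomm_ring
      _ = (Algebra.TensorProduct.assoc K K K H H H (Finv ⊗ₜ[K] (1:H)))
          * ((((1:H) ⊗ₜ[K] F)
            * (TensorProduct.map LinearMap.id (Coalgebra.comul (R := K)) F))
            * (TensorProduct.map LinearMap.id (Coalgebra.comul (R := K)) Finv)) := by
          rw [hcoc]
      _ = ((Algebra.TensorProduct.assoc K K K H H H (Finv ⊗ₜ[K] (1:H))) * ((1:H) ⊗ₜ[K] F))
          * ((TensorProduct.map LinearMap.id (Coalgebra.comul (R := K)) F)
            * (TensorProduct.map LinearMap.id (Coalgebra.comul (R := K)) Finv)) := by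
          noncomm_ring
      _ = _ := by rw [hD, mul_one]
  have hLid : ∀ z : H ⊗[K] H,
      (Algebra.TensorProduct.lid K H)
        ((Algebra.TensorProduct.map (Bialgebra.counitAlgHom K H) (AlgHom.id K H)) z)
        = TensorProduct.lid K H
            (TensorProduct.map (Coalgebra.counit (R := K)) LinearMap.id z) := by
    intro z
    induction z using TensorProduct.induction_on with
    | zero => simp
    | add x y hx hy => simp [hx, hy]
    | tmul a b => simp
  have hRid : ∀ z : H ⊗[K] H,
      (Algebra.TensorProduct.rid K K H)
        ((Algebra.TensorProduct.map (AlgHom.id K H) (Bialgebra.counitAlgHom K H)) z)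
        = TensorProduct.rid K H
            (TensorProduct.map LinearMap.id (Coalgebra.counit (R := K)) z) := by
    intro z
    induction z using TensorProduct.induction_on with
    | zero => simp
    | add x y hx hy => simp [hx, hy]
    | tmul a b => simp
  have n1' : TensorProduct.lid K H
      (TensorProduct.map (Coalgebra.counit (R := K)) LinearMap.id Finv) = 1 := by
    have h2 : TensorProduct.lid K H
          (TensorProduct.map (Coalgebra.counit (R := K)) LinearMap.id F)
        * TensorProduct.lid K H
          (TensorProduct.map (Coalgebra.counit (R := K)) LinearMap.id Finv) = 1 := by
      rw [← hLid, ← hLid, ← map_mul, ← map_mul, hF, map_one, map_one]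
    rwa [hn1, one_mul] at h2
  have n2' : TensorProduct.rid K H
      (TensorProduct.map LinearMap.id (Coalgebra.counit (R := K)) Finv) = 1 := by
    have h2 : TensorProduct.rid K H
          (TensorProduct.map LinearMap.id (Coalgebra.counit (R := K)) F)
        * TensorProduct.rid K H
          (TensorProduct.map LinearMap.id (Coalgebra.counit (R := K)) Finv) = 1 := by
      rw [← hRid, ← hRid, ← map_mul, ← map_mul, hF, map_one, map_one]
    rwa [hn2, one_mul] at h2
  constructor
  · have s1 := twStep1 K H 1 1 Finv F
    have key : chiF K H F * chiFinv K H Finv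
        = twPhi K H (((1:H) ⊗ₜ[K] Finv)
            * (Algebra.TensorProduct.assoc K K K H H H (F ⊗ₜ[K] (1:H)))) := by
      rw [s1]
      simp only [one_mul, mul_one]
      rfl
    rw [key, hE1, twLemA, hn2, n1', one_mul]
  · have s2 := twStep2 K H 1 1 Finv F
    have key : chiFinv K H Finv * chiF K H F
        = twPsi K H ((Algebra.TensorProduct.assoc K K K H H H (Finv ⊗ₜ[K] (1:H)))
            * ((1:H) ⊗ₜ[K] F)) := by
      rw [s2, tw_antipode_one]
      simp only [one_mul, mul_one]
      rfl
    rw [key, ← hE2, twLemB, hn1, n2', tw_antipode_one, one_mul]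
end

section
/- Given a Hopf algebra H with twist F, the deformed Hopf algebra H^F := (H, μ, Δ^F, ε, S^F) with Δ^F(ξ) = F Δ(ξ) F⁻¹ and S^F(ξ) = χ S(ξ) χ⁻¹ (where χ = fᵅS(f_ᵅ)) satisfies the antipode axiom: μ∘(S^F⊗id)∘Δ^F(ξ) = ε(ξ)1 = μ∘(id⊗S^F)∘Δ^F(ξ) for all ξ ∈ H. -/
open TensorProduct LinearMap

variable (K : Type*) [CommRing K] (H : Type*) [Ring H] [HopfAlgebra K H]

/-- The deformed antipode `S^F(ξ) = χ S(ξ) χ⁻¹`. -/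
noncomputable def antipodeF (F Finv : H ⊗[K] H) : H →ₗ[K] H :=
  (mulRight K (chiFinv K H Finv)) ∘ₗ (mulLeft K (chiF K H F)) ∘ₗ
    (HopfAlgebra.antipode (R := K))

/-! ### Auxiliary material: the antipode is an anti-homomorphism -/

open Coalgebra

local notation "S" => HopfAlgebra.antipode (R := K) (A := H)
local notation "aT" => Algebra.TensorProduct.assoc K K K H H H

lemma twist_antipode_one' : S (1 : H) = 1 := by
  have := HopfAlgebra.mul_antipode_rTensor_comul_apply (R := K) (a := (1:H))
  simpa [Algebra.TensorProduct.one_def] using this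

lemma twist_sum_counit_smul_left {a : H} (r : Coalgebra.Repr K a (H × H)) :
    ∑ i ∈ r.index, counit (R := K) (r.right i) • r.left i = a := by
  have h := congrArg (TensorProduct.rid K H) (sum_tmul_counit_eq (R := K) r)
  simp only [map_sum, TensorProduct.rid_tmul, one_smul] at h
  exact h

lemma twist_sum_counit_smul_right {a : H} (r : Coalgebra.Repr K a (H × H)) :
    ∑ i ∈ r.index, counit (R := K) (r.left i) • r.right i = a := by
  have h := congrArg (TensorProduct.lid K H) (sum_counit_tmul_eq (R := K) r)
  simp only [map_sum, TensorProduct.lid_tmul, one_smul] at h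
  exact h

/-- Ψ((y⊗z)⊗(v⊗w)) = (y*v)*(S w * S z) -/
noncomputable def PsiMap : (H ⊗[K] H) ⊗[K] (H ⊗[K] H) →ₗ[K] H :=
  LinearMap.mul' K H ∘ₗ
    TensorProduct.map (LinearMap.mul' K H)
      (LinearMap.mul' K H ∘ₗ TensorProduct.map S S ∘ₗ (TensorProduct.comm K H H).toLinearMap) ∘ₗ
    (tensorTensorTensorComm K H H H H).toLinearMap

@[simp] lemma PsiMap_tmul (y z v w : H) :
    PsiMap K H ((y ⊗ₜ[K] z) ⊗ₜ[K] (v ⊗ₜ[K] w)) = (y * v) * (S w * S z) := by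
  simp [PsiMap]

lemma PsiMap_tmul_left (y z : H) (w : H ⊗[K] H) :
    PsiMap K H ((y ⊗ₜ[K] z) ⊗ₜ[K] w)
      = y * LinearMap.mul' K H (LinearMap.lTensor H S w) * S z := by
  induction w using TensorProduct.induction_on with
  | zero => simp
  | tmul u v => simp [mul_assoc]
  | add u v hu hv => simp [TensorProduct.tmul_add, hu, hv, mul_add, add_mul]

lemma PsiMap_comul_right (z : H ⊗[K] H) (t : H) :
    PsiMap K H (z ⊗ₜ[K] comul (R := K) t)
      = counit (R := K) t • LinearMap.mul' K H (LinearMap.lTensor H S z) := by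
  induction z using TensorProduct.induction_on with
  | zero => simp
  | tmul y z =>
      rw [PsiMap_tmul_left, HopfAlgebra.mul_antipode_lTensor_comul_apply,
        Algebra.algebraMap_eq_smul_one]
      simp [mul_smul_comm, smul_mul_assoc]
  | add u v hu hv => simp [TensorProduct.add_tmul, hu, hv]

lemma PsiMap_comul_comul (s t : H) :
    PsiMap K H (comul (R := K) s ⊗ₜ[K] comul (R := K) t)
      = (counit (R := K) s * counit (R := K) t) • (1 : H) := by
  rw [PsiMap_comul_right, HopfAlgebra.mul_antipode_lTensor_comul_apply,
    Algebra.algebraMap_eq_smul_one, smul_smul, mul_comm]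

lemma twist_mul_map_S_mulRight (C : H) (w : H ⊗[K] H) :
    LinearMap.mul' K H (TensorProduct.map S (LinearMap.mulRight K C) w)
      = LinearMap.mul' K H (LinearMap.rTensor H S w) * C := by
  induction w using TensorProduct.induction_on with
  | zero => simp
  | tmul a b => simp [mul_assoc]
  | add u v hu hv => simp [hu, hv, add_mul]

lemma twist_collapse_comul (s C : H) :
    LinearMap.mul' K H (TensorProduct.map S (LinearMap.mulRight K C) (comul (R := K) s))
      = counit (R := K) s • C := by
  rw [twist_mul_map_S_mulRight, HopfAlgebra.mul_antipode_rTensor_comul_apply,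
    Algebra.algebraMap_eq_smul_one, smul_mul_assoc, one_mul]

/-- Φ((x⊗za)⊗(u⊗zb)) = S(x*u) * Ψ(za⊗zb) -/
noncomputable def PhiMap : (H ⊗[K] (H ⊗[K] H)) ⊗[K] (H ⊗[K] (H ⊗[K] H)) →ₗ[K] H :=
  LinearMap.mul' K H ∘ₗ
    TensorProduct.map (S ∘ₗ LinearMap.mul' K H) (PsiMap K H) ∘ₗ
    (tensorTensorTensorComm K H (H ⊗[K] H) H (H ⊗[K] H)).toLinearMap

@[simp] lemma PhiMap_tmul (x u : H) (za zb : H ⊗[K] H) :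
    PhiMap K H ((x ⊗ₜ[K] za) ⊗ₜ[K] (u ⊗ₜ[K] zb)) = S (x * u) * PsiMap K H (za ⊗ₜ[K] zb) := by
  simp [PhiMap, PsiMap]

lemma PhiMap_assoc (za zb : H ⊗[K] H) (z w : H) :
    PhiMap K H ((TensorProduct.assoc K H H H (za ⊗ₜ[K] z)) ⊗ₜ[K]
        (TensorProduct.assoc K H H H (zb ⊗ₜ[K] w)))
      = LinearMap.mul' K H
          (TensorProduct.map S (LinearMap.mulRight K (S w * S z)) (za * zb)) := by
  induction za using TensorProduct.induction_on with
  | zero =>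
      simp only [TensorProduct.zero_tmul, LinearEquiv.map_zero, LinearMap.map_zero,
        zero_mul, mul_zero, TensorProduct.tmul_zero]
  | tmul x1 x2 =>
      induction zb using TensorProduct.induction_on with
      | zero =>
          simp only [TensorProduct.zero_tmul, TensorProduct.tmul_zero, LinearEquiv.map_zero,
            LinearMap.map_zero, mul_zero, zero_mul]
      | tmul u1 u2 => simp [Algebra.TensorProduct.tmul_mul_tmul, mul_assoc]
      | add p q hp hq =>
          simp only [TensorProduct.add_tmul, map_add, TensorProduct.tmul_add, mul_add] at *
          rw [hp, hq]
  | add p q hp hq =>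
      simp only [TensorProduct.add_tmul, map_add, TensorProduct.tmul_add, add_mul] at *
      rw [hp, hq]

theorem twist_antipode_mul' (a b : H) : S (a * b) = S b * S a := by
  classical
  set ra := ℛ K a with hra
  set rb := ℛ K b with hrb
  have hA1 : (LinearMap.lTensor H (comul (R := K))) (comul (R := K) a)
      = ∑ i ∈ ra.index, ra.left i ⊗ₜ[K] comul (R := K) (ra.right i) := by
    rw [← ra.eq, map_sum]; simp
  have hB1 : (LinearMap.lTensor H (comul (R := K))) (comul (R := K) b)
      = ∑ j ∈ rb.index, rb.left j ⊗ₜ[K] comul (R := K) (rb.right j) := by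
    rw [← rb.eq, map_sum]; simp
  have hA2 : (LinearMap.lTensor H (comul (R := K))) (comul (R := K) a)
      = ∑ i ∈ ra.index,
          (TensorProduct.assoc K H H H) (comul (R := K) (ra.left i) ⊗ₜ[K] ra.right i) := by
    rw [← Coalgebra.coassoc_apply, ← ra.eq, map_sum, map_sum]; simp
  have hB2 : (LinearMap.lTensor H (comul (R := K))) (comul (R := K) b)
      = ∑ j ∈ rb.index,
          (TensorProduct.assoc K H H H) (comul (R := K) (rb.left j) ⊗ₜ[K] rb.right j) := by
    rw [← Coalgebra.coassoc_apply, ← rb.eq, map_sum, map_sum]; simp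
  have e1 : PhiMap K H ((LinearMap.lTensor H (comul (R := K))) (comul (R := K) a) ⊗ₜ[K]
      (LinearMap.lTensor H (comul (R := K))) (comul (R := K) b)) = S (a * b) := by
    rw [hA1, hB1, TensorProduct.sum_tmul, map_sum]
    have step : ∀ i, PhiMap K H ((ra.left i ⊗ₜ[K] comul (R := K) (ra.right i)) ⊗ₜ[K]
        ∑ j ∈ rb.index, rb.left j ⊗ₜ[K] comul (R := K) (rb.right j))
        = ∑ j ∈ rb.index, (counit (R := K) (ra.right i) * counit (R := K) (rb.right j)) •
            S (ra.left i * rb.left j) := by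
      intro i
      rw [TensorProduct.tmul_sum, map_sum]
      refine Finset.sum_congr rfl fun j _ => ?_
      rw [PhiMap_tmul, PsiMap_comul_comul, mul_smul_comm, mul_one]
    simp_rw [step]
    conv_rhs => rw [← twist_sum_counit_smul_left K H ra, ← twist_sum_counit_smul_left K H rb,
      Finset.sum_mul_sum, map_sum]
    refine Finset.sum_congr rfl fun i _ => ?_
    rw [map_sum]
    refine Finset.sum_congr rfl fun j _ => ?_
    rw [smul_mul_smul_comm, map_smul]
  have e2 : PhiMap K H ((LinearMap.lTensor H (comul (R := K))) (comul (R := K) a) ⊗ₜ[K]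
      (LinearMap.lTensor H (comul (R := K))) (comul (R := K) b)) = S b * S a := by
    rw [hA2, hB2, TensorProduct.sum_tmul, map_sum]
    have step : ∀ i, PhiMap K H
        ((TensorProduct.assoc K H H H) (comul (R := K) (ra.left i) ⊗ₜ[K] ra.right i) ⊗ₜ[K]
          ∑ j ∈ rb.index,
            (TensorProduct.assoc K H H H) (comul (R := K) (rb.left j) ⊗ₜ[K] rb.right j))
        = ∑ j ∈ rb.index, (counit (R := K) (ra.left i) * counit (R := K) (rb.left j)) •
            (S (rb.right j) * S (ra.right i)) := by
      intro i
      rw [TensorProduct.tmul_sum, map_sum]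
      refine Finset.sum_congr rfl fun j _ => ?_
      rw [PhiMap_assoc, ← Bialgebra.comul_mul, twist_collapse_comul, Bialgebra.counit_mul]
    simp_rw [step]
    conv_rhs => rw [← twist_sum_counit_smul_right K H rb, ← twist_sum_counit_smul_right K H ra,
      map_sum, map_sum, Finset.sum_mul_sum]
    rw [Finset.sum_comm]
    refine Finset.sum_congr rfl fun j _ => ?_
    refine Finset.sum_congr rfl fun i _ => ?_
    rw [map_smul, map_smul, smul_mul_smul_comm, mul_comm (counit (R := K) (rb.left j))]
  exact e1.symm.trans e2

/-! ### The maps `P c (a⊗b) = S(a) c b` and `Q c (a⊗b) = a c S(b)` -/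

/-- `P c (a⊗b) = S(a) * c * b` -/
noncomputable def Pmap (c : H) : H ⊗[K] H →ₗ[K] H :=
  LinearMap.mul' K H ∘ₗ TensorProduct.map (LinearMap.mulRight K c ∘ₗ S) LinearMap.id

@[simp] lemma Pmap_tmul (c a b : H) : Pmap K H c (a ⊗ₜ[K] b) = S a * c * b := by
  simp [Pmap]

/-- `Q c (a⊗b) = a * c * S(b)` -/
noncomputable def Qmap (c : H) : H ⊗[K] H →ₗ[K] H :=
  LinearMap.mul' K H ∘ₗ TensorProduct.map LinearMap.id (LinearMap.mulLeft K c ∘ₗ S)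

@[simp] lemma Qmap_tmul (c a b : H) : Qmap K H c (a ⊗ₜ[K] b) = a * (c * S b) := by
  simp [Qmap]

lemma Pmap_zero_c (u : H ⊗[K] H) : Pmap K H 0 u = 0 := by
  induction u using TensorProduct.induction_on with
  | zero => simp
  | tmul a b => simp
  | add x y hx hy => simp [map_add, hx, hy]

lemma Pmap_add_c (c d : H) (u : H ⊗[K] H) :
    Pmap K H (c + d) u = Pmap K H c u + Pmap K H d u := by
  induction u using TensorProduct.induction_on with
  | zero => simp
  | tmul a b => simp [mul_add, add_mul]
  | add x y hx hy => simp only [map_add, hx, hy]; abel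

lemma Pmap_smul_c (r : K) (c : H) (u : H ⊗[K] H) :
    Pmap K H (r • c) u = r • Pmap K H c u := by
  induction u using TensorProduct.induction_on with
  | zero => simp
  | tmul a b => simp [mul_smul_comm, smul_mul_assoc]
  | add x y hx hy => simp only [map_add, hx, hy, smul_add]

lemma Qmap_zero_c (u : H ⊗[K] H) : Qmap K H 0 u = 0 := by
  induction u using TensorProduct.induction_on with
  | zero => simp
  | tmul a b => simp
  | add x y hx hy => simp [map_add, hx, hy]

lemma Qmap_add_c (c d : H) (u : H ⊗[K] H) :
    Qmap K H (c + d) u = Qmap K H c u + Qmap K H d u := by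
  induction u using TensorProduct.induction_on with
  | zero => simp
  | tmul a b => simp [mul_add, add_mul]
  | add x y hx hy => simp only [map_add, hx, hy]; abel

lemma Qmap_smul_c (r : K) (c : H) (u : H ⊗[K] H) :
    Qmap K H (r • c) u = r • Qmap K H c u := by
  induction u using TensorProduct.induction_on with
  | zero => simp
  | tmul a b => simp [mul_smul_comm, smul_mul_assoc]
  | add x y hx hy => simp only [map_add, hx, hy, smul_add]

lemma Pmap_mul (c : H) (t u : H ⊗[K] H) :
    Pmap K H c (t * u) = Pmap K H (Pmap K H c t) u := by
  induction t using TensorProduct.induction_on with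
  | zero => simp [Pmap_zero_c]
  | add x y hx hy => simp only [add_mul, map_add, hx, hy, Pmap_add_c]
  | tmul a b =>
      induction u using TensorProduct.induction_on with
      | zero => simp
      | add x y hx hy => simp only [mul_add, map_add, hx, hy]
      | tmul x y =>
          simp only [Algebra.TensorProduct.tmul_mul_tmul, Pmap_tmul, twist_antipode_mul']
          simp [mul_assoc]

lemma Qmap_mul (c : H) (t u : H ⊗[K] H) :
    Qmap K H c (t * u) = Qmap K H (Qmap K H c u) t := by
  induction t using TensorProduct.induction_on with
  | zero => simp
  | add x y hx hy => simp only [add_mul, map_add, hx, hy]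
  | tmul a b =>
      induction u using TensorProduct.induction_on with
      | zero => simp [Qmap_zero_c]
      | add x y hx hy => simp only [mul_add, map_add, hx, hy, Qmap_add_c]
      | tmul x y =>
          simp only [Algebra.TensorProduct.tmul_mul_tmul, Qmap_tmul, twist_antipode_mul']
          simp [mul_assoc]

lemma Pmap_one_eq (w : H ⊗[K] H) :
    Pmap K H 1 w = LinearMap.mul' K H (TensorProduct.map S LinearMap.id w) := by
  induction w using TensorProduct.induction_on with
  | zero => simp
  | tmul a b => simp
  | add x y hx hy => simp only [map_add, hx, hy]

lemma Qmap_one_eq (w : H ⊗[K] H) :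
    Qmap K H 1 w = LinearMap.mul' K H (TensorProduct.map LinearMap.id S w) := by
  induction w using TensorProduct.induction_on with
  | zero => simp
  | tmul a b => simp
  | add x y hx hy => simp only [map_add, hx, hy]

lemma Pmap_one_comul (ξ : H) :
    Pmap K H 1 (comul (R := K) ξ) = counit (R := K) ξ • (1 : H) := by
  rw [Pmap_one_eq]
  have : TensorProduct.map S (LinearMap.id (M := H)) (comul (R := K) ξ)
      = LinearMap.rTensor H S (comul (R := K) ξ) := rfl
  rw [this, HopfAlgebra.mul_antipode_rTensor_comul_apply, Algebra.algebraMap_eq_smul_one]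

lemma Qmap_one_comul (ξ : H) :
    Qmap K H 1 (comul (R := K) ξ) = counit (R := K) ξ • (1 : H) := by
  rw [Qmap_one_eq]
  have : TensorProduct.map (LinearMap.id (M := H)) S (comul (R := K) ξ)
      = LinearMap.lTensor H S (comul (R := K) ξ) := rfl
  rw [this, HopfAlgebra.mul_antipode_lTensor_comul_apply, Algebra.algebraMap_eq_smul_one]

lemma Pmap_one_one : Pmap K H 1 (1 : H ⊗[K] H) = 1 := by
  rw [Algebra.TensorProduct.one_def, Pmap_tmul, twist_antipode_one']
  simp

lemma Qmap_one_one : Qmap K H 1 (1 : H ⊗[K] H) = 1 := by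
  rw [Algebra.TensorProduct.one_def, Qmap_tmul, twist_antipode_one']
  simp

/-! ### The map θ and the identity `χ χ⁻¹ = 1` -/

/-- θ(a ⊗ (b ⊗ c)) = a * (S b * c) -/
noncomputable def thetaMap : H ⊗[K] (H ⊗[K] H) →ₗ[K] H :=
  LinearMap.mul' K H ∘ₗ
    TensorProduct.map LinearMap.id (LinearMap.mul' K H ∘ₗ TensorProduct.map S LinearMap.id)

@[simp] lemma thetaMap_tmul (a : H) (z : H ⊗[K] H) :
    thetaMap K H (a ⊗ₜ[K] z)
      = a * LinearMap.mul' K H (TensorProduct.map S LinearMap.id z) := by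
  simp [thetaMap]

lemma twist_T0 (c m b y : H) (z : H ⊗[K] H) :
    thetaMap K H ((c ⊗ₜ[K] (m ⊗ₜ[K] b)) * (aT (z ⊗ₜ[K] y)))
      = (c * LinearMap.mul' K H (TensorProduct.map LinearMap.id S z)) * (S m * (b * y)) := by
  induction z using TensorProduct.induction_on with
  | zero =>
      simp only [TensorProduct.zero_tmul, _root_.map_zero, mul_zero, zero_mul]
  | tmul p q =>
      rw [Algebra.TensorProduct.assoc_tmul, Algebra.TensorProduct.tmul_mul_tmul,
        Algebra.TensorProduct.tmul_mul_tmul, thetaMap_tmul]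
      simp [twist_antipode_mul', mul_assoc]
  | add u v hu hv =>
      simp only [TensorProduct.add_tmul, _root_.map_add, mul_add, add_mul, hu, hv]

lemma twist_T1 (u v : H ⊗[K] H) (x y : H) :
    thetaMap K H ((((1:H) ⊗ₜ[K] u) * (aT (v ⊗ₜ[K] (1:H)))) * (aT ((comul (R := K) x) ⊗ₜ[K] y)))
      = counit (R := K) x •
          (LinearMap.mul' K H (TensorProduct.map LinearMap.id S v) *
            (LinearMap.mul' K H (TensorProduct.map S LinearMap.id u) * y)) := by
  induction u using TensorProduct.induction_on with
  | zero => simp only [TensorProduct.tmul_zero, _root_.map_zero, zero_mul, mul_zero, smul_zero]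
  | add p q hp hq =>
      simp only [TensorProduct.tmul_add, _root_.map_add, add_mul, mul_add, hp, hq, smul_add]
  | tmul a b =>
      induction v using TensorProduct.induction_on with
      | zero => simp only [TensorProduct.zero_tmul, _root_.map_zero, zero_mul, mul_zero,
          smul_zero]
      | add p q hp hq =>
          simp only [TensorProduct.add_tmul, _root_.map_add, add_mul, mul_add, hp, hq, smul_add]
      | tmul c d =>
          rw [Algebra.TensorProduct.assoc_tmul, Algebra.TensorProduct.tmul_mul_tmul,
            Algebra.TensorProduct.tmul_mul_tmul, one_mul, mul_one]
          rw [twist_T0]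
          have hinner : TensorProduct.map (LinearMap.id (M := H)) S (comul (R := K) x)
              = LinearMap.lTensor H S (comul (R := K) x) := rfl
          rw [hinner, HopfAlgebra.mul_antipode_lTensor_comul_apply,
            Algebra.algebraMap_eq_smul_one, twist_antipode_mul']
          simp only [TensorProduct.map_tmul, LinearMap.mul'_apply, LinearMap.id_coe, id_eq]
          rw [mul_smul_comm, mul_one]
          rw [smul_mul_assoc]
          congr 1
          simp [mul_assoc]

lemma twist_T2 (u v w : H ⊗[K] H) :
    thetaMap K H ((((1:H) ⊗ₜ[K] u) * (aT (v ⊗ₜ[K] (1:H)))) *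
        (aT (TensorProduct.map (comul (R := K)) LinearMap.id w)))
      = LinearMap.mul' K H (TensorProduct.map LinearMap.id S v) *
          (LinearMap.mul' K H (TensorProduct.map S LinearMap.id u) *
            TensorProduct.lid K H (TensorProduct.map (counit (R := K)) LinearMap.id w)) := by
  induction w using TensorProduct.induction_on with
  | zero => simp only [_root_.map_zero, mul_zero]
  | add p q hp hq => simp only [_root_.map_add, mul_add, hp, hq]
  | tmul x y =>
      rw [TensorProduct.map_tmul]
      simp only [LinearMap.id_coe, id_eq]
      rw [twist_T1, TensorProduct.map_tmul, TensorProduct.lid_tmul]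
      simp only [LinearMap.id_coe, id_eq]
      rw [mul_smul_comm, mul_smul_comm]

lemma twist_T3 (w : H ⊗[K] H) :
    thetaMap K H (TensorProduct.map LinearMap.id (comul (R := K)) w)
      = TensorProduct.rid K H (TensorProduct.map LinearMap.id (counit (R := K)) w) := by
  induction w using TensorProduct.induction_on with
  | zero => simp only [_root_.map_zero]
  | add p q hp hq => simp only [_root_.map_add, hp, hq]
  | tmul a b =>
      rw [TensorProduct.map_tmul, TensorProduct.map_tmul, thetaMap_tmul]
      simp only [LinearMap.id_coe, id_eq]
      have : TensorProduct.map S (LinearMap.id (M := H)) (comul (R := K) b)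
          = LinearMap.rTensor H S (comul (R := K) b) := rfl
      rw [this, HopfAlgebra.mul_antipode_rTensor_comul_apply,
        Algebra.algebraMap_eq_smul_one, TensorProduct.rid_tmul]
      simp [mul_smul_comm]

lemma chi_mul_chiFinv (F Finv : H ⊗[K] H) (hF' : Finv * F = 1)
    (htw : IsTwist K H (Coalgebra.comul (R := K)) (Coalgebra.counit (R := K)) F) :
    chiF K H F * chiFinv K H Finv = 1 := by
  obtain ⟨hc, hl, hr⟩ := htw
  have A1 : thetaMap K H (((1:H) ⊗ₜ[K] Finv) *
        ((aT (F ⊗ₜ[K] (1:H))) * (aT (TensorProduct.map (comul (R := K)) LinearMap.id F))))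
      = chiF K H F * chiFinv K H Finv := by
    rw [← mul_assoc, twist_T2, hl, mul_one]
    rfl
  have A2 : thetaMap K H (((1:H) ⊗ₜ[K] Finv) *
        ((aT (F ⊗ₜ[K] (1:H))) * (aT (TensorProduct.map (comul (R := K)) LinearMap.id F))))
      = 1 := by
    rw [hc, ← mul_assoc, Algebra.TensorProduct.tmul_mul_tmul, one_mul, hF',
      ← Algebra.TensorProduct.one_def, one_mul, twist_T3, hr]
  rw [← A1, A2]

/-- the deformed Hopf algebra `H^F` with coproduct `Δ^F` and antipode
`S^F(ξ) = χ S(ξ) χ⁻¹` satisfies the antipode axiom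
`μ∘(S^F⊗id)∘Δ^F(ξ) = ε(ξ)1 = μ∘(id⊗S^F)∘Δ^F(ξ)`. -/
theorem antipodeF_axiom (F Finv : H ⊗[K] H) (hF : F * Finv = 1) (hF' : Finv * F = 1)
    (htw : IsTwist K H (Coalgebra.comul (R := K)) (Coalgebra.counit (R := K)) F) :
    ∀ ξ : H,
      LinearMap.mul' K H
        (TensorProduct.map (antipodeF K H F Finv) LinearMap.id ((comulF K H F Finv) ξ))
        = Coalgebra.counit (R := K) ξ • (1 : H)
      ∧ LinearMap.mul' K H
        (TensorProduct.map LinearMap.id (antipodeF K H F Finv) ((comulF K H F Finv) ξ))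
        = Coalgebra.counit (R := K) ξ • (1 : H) := by
  intro ξ
  have hchi : chiF K H F * chiFinv K H Finv = 1 := chi_mul_chiFinv K H F Finv hF' htw
  have hcF : comulF K H F Finv ξ = (F * comul (R := K) ξ) * Finv := rfl
  have hchiFinv : chiFinv K H Finv = Pmap K H 1 Finv := (Pmap_one_eq K H Finv).symm
  have hchiF : chiF K H F = Qmap K H 1 F := (Qmap_one_eq K H F).symm
  have hPF : Pmap K H (chiFinv K H Finv) F = 1 := by
    rw [hchiFinv, ← Pmap_mul, hF', Pmap_one_one]
  have hQFinv : Qmap K H (chiF K H F) Finv = 1 := by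
    rw [hchiF, ← Qmap_mul, hF', Qmap_one_one]
  constructor
  · -- left antipode axiom
    have hmap : ∀ w : H ⊗[K] H,
        LinearMap.mul' K H (TensorProduct.map (antipodeF K H F Finv) LinearMap.id w)
          = chiF K H F * Pmap K H (chiFinv K H Finv) w := by
      intro w
      induction w using TensorProduct.induction_on with
      | zero => simp
      | add x y hx hy => simp only [map_add, hx, hy, mul_add]
      | tmul a b =>
          simp only [TensorProduct.map_tmul, LinearMap.mul'_apply, LinearMap.id_coe, id_eq,
            Pmap_tmul, antipodeF, LinearMap.comp_apply, LinearMap.mulLeft_apply,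
            LinearMap.mulRight_apply]
          simp [mul_assoc]
    rw [hmap, hcF, Pmap_mul, Pmap_mul, hPF, Pmap_one_comul, Pmap_smul_c, ← hchiFinv,
      mul_smul_comm, hchi]
  · -- right antipode axiom
    have hmap : ∀ w : H ⊗[K] H,
        LinearMap.mul' K H (TensorProduct.map LinearMap.id (antipodeF K H F Finv) w)
          = Qmap K H (chiF K H F) w * chiFinv K H Finv := by
      intro w
      induction w using TensorProduct.induction_on with
      | zero => simp
      | add x y hx hy => simp only [map_add, hx, hy, add_mul]
      | tmul a b =>
          simp only [TensorProduct.map_tmul, LinearMap.mul'_apply, LinearMap.id_coe, id_eq,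
            Qmap_tmul, antipodeF, LinearMap.comp_apply, LinearMap.mulLeft_apply,
            LinearMap.mulRight_apply]
          simp [mul_assoc]
    rw [hmap, hcF, Qmap_mul, hQFinv, Qmap_mul, Qmap_one_comul, Qmap_smul_c, ← hchiF,
      smul_mul_assoc, hchi]
end

section
/- Let H be a Hopf algebra, A a left H-module algebra, V a left H-module A-bimodule, and F a twist. Then V_⋆ with actions a⋆v = (f̄ᵅ▷a)·(f̄_ᵅ▷v) and v⋆a = (f̄ᵅ▷v)·(f̄_ᵅ▷a) is an A_⋆-bimodule: (a⋆v)⋆b = a⋆(v⋆b), a⋆(b⋆v) = (a⋆b)⋆v, and (v⋆a)⋆b = v⋆(a⋆b) for all a,b ∈ A, v ∈ V. -/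
open TensorProduct LinearMap

/-- Generic "Sweedler application": for a bilinear map `B`, families `F x, G y : H →ₗ M/N`
and a tensor `t = Σ t₁ ⊗ t₂ ∈ H ⊗ H`, this is the bilinear map
`(x, y) ↦ Σ B (F x t₁) (G y t₂)`. -/
noncomputable def sw {K : Type*} [CommRing K] {H M N P X Y : Type*}
    [AddCommGroup H] [Module K H] [AddCommGroup M] [Module K M] [AddCommGroup N] [Module K N]
    [AddCommGroup P] [Module K P] [AddCommGroup X] [Module K X] [AddCommGroup Y] [Module K Y]
    (B : M →ₗ[K] N →ₗ[K] P) (F : X →ₗ[K] H →ₗ[K] M)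
    (G : Y →ₗ[K] H →ₗ[K] N) (t : H ⊗[K] H) : X →ₗ[K] Y →ₗ[K] P :=
  LinearMap.mk₂ K (fun x y => TensorProduct.lift (B.compl₁₂ (F x) (G y)) t)
    (fun x x' y => by
      induction t using TensorProduct.induction_on with
      | zero => simp
      | tmul η ζ => simp [map_add]
      | add u v hu hv => simp only [map_add] at hu hv ⊢; rw [hu, hv]; abel)
    (fun c x y => by
      induction t using TensorProduct.induction_on with
      | zero => simp
      | tmul η ζ => simp [map_smul]
      | add u v hu hv => simp only [map_add] at hu hv ⊢; rw [hu, hv]; rw [smul_add])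
    (fun x y y' => by
      induction t using TensorProduct.induction_on with
      | zero => simp
      | tmul η ζ => simp [map_add]
      | add u v hu hv => simp only [map_add] at hu hv ⊢; rw [hu, hv]; abel)
    (fun c x y => by
      induction t using TensorProduct.induction_on with
      | zero => simp
      | tmul η ζ => simp [map_smul]
      | add u v hu hv => simp only [map_add] at hu hv ⊢; rw [hu, hv]; rw [smul_add])

variable (K : Type*) [CommRing K] (H : Type*) [Ring H] [HopfAlgebra K H]

variable (A : Type*) [Ring A] [Algebra K A]

/-- `A` is a left `H`-module algebra via the `K`-linear action `act`:
`act` is a unital multiplicative action, `ξ▷(ab) = (ξ₁▷a)(ξ₂▷b)` and `ξ▷1 = ε(ξ)1`. -/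
noncomputable def IsModuleAlgebra (act : H →ₗ[K] A →ₗ[K] A) : Prop :=
  (∀ ξ ζ : H, act (ξ * ζ) = act ξ ∘ₗ act ζ) ∧ (act 1 = LinearMap.id)
  ∧ (∀ (ξ : H) (a b : A),
      act ξ (a * b) = sw (LinearMap.mul K A) act.flip act.flip (Coalgebra.comul (R := K) ξ) a b)
  ∧ (∀ ξ : H, act ξ (1 : A) = Coalgebra.counit (R := K) ξ • (1 : A))

/-- The star product `a ⋆ b = (f̄ᵅ▷a)(f̄_ᵅ▷b)`, as a bilinear map. -/
noncomputable def starBil (act : H →ₗ[K] A →ₗ[K] A) (Finv : H ⊗[K] H) : A →ₗ[K] A →ₗ[K] A :=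
  sw (LinearMap.mul K A) act.flip act.flip Finv

variable (V : Type*) [AddCommGroup V] [Module K V]

/-- `V` is a left `H`-module `A`-bimodule: `l` is a left `A`-action, `r` a right `A`-action
(`r a v = v·a`), they commute, and `ρ` is a left `H`-action satisfying
`ξ▷(a·v) = (ξ₁▷a)·(ξ₂▷v)` and `ξ▷(v·a) = (ξ₁▷v)·(ξ₂▷a)`. -/
noncomputable def IsHModuleBimodule (act : H →ₗ[K] A →ₗ[K] A)
    (l r : A →ₗ[K] V →ₗ[K] V) (ρ : H →ₗ[K] V →ₗ[K] V) : Prop :=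
  (∀ a b : A, l (a * b) = l a ∘ₗ l b) ∧ (l 1 = LinearMap.id)
  ∧ (∀ a b : A, r (a * b) = r b ∘ₗ r a) ∧ (r 1 = LinearMap.id)
  ∧ (∀ a b : A, l a ∘ₗ r b = r b ∘ₗ l a)
  ∧ (∀ ξ ζ : H, ρ (ξ * ζ) = ρ ξ ∘ₗ ρ ζ) ∧ (ρ 1 = LinearMap.id)
  ∧ (∀ (ξ : H) (a : A) (v : V),
      ρ ξ (l a v) = sw l act.flip ρ.flip (Coalgebra.comul (R := K) ξ) a v)
  ∧ (∀ (ξ : H) (a : A) (v : V),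
      ρ ξ (r a v) = sw r.flip ρ.flip act.flip (Coalgebra.comul (R := K) ξ) v a)

/-- `V` is a left `H`-module right `A`-module: `r` a right `A`-action (`r a v = v·a`),
`ρ` a left `H`-action with `ξ▷(v·a) = (ξ₁▷v)·(ξ₂▷a)`. -/
noncomputable def IsHModuleRight (act : H →ₗ[K] A →ₗ[K] A)
    (r : A →ₗ[K] V →ₗ[K] V) (ρ : H →ₗ[K] V →ₗ[K] V) : Prop :=
  (∀ a b : A, r (a * b) = r b ∘ₗ r a) ∧ (r 1 = LinearMap.id)
  ∧ (∀ ξ ζ : H, ρ (ξ * ζ) = ρ ξ ∘ₗ ρ ζ) ∧ (ρ 1 = LinearMap.id)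
  ∧ (∀ (ξ : H) (a : A) (v : V),
      ρ ξ (r a v) = sw r.flip ρ.flip act.flip (Coalgebra.comul (R := K) ξ) v a)

/-- The deformed left action `a ⋆ v = (f̄ᵅ▷a)·(f̄_ᵅ▷v)`. -/
noncomputable def lstar (act : H →ₗ[K] A →ₗ[K] A) (l : A →ₗ[K] V →ₗ[K] V)
    (ρ : H →ₗ[K] V →ₗ[K] V) (Finv : H ⊗[K] H) : A →ₗ[K] V →ₗ[K] V :=
  sw l act.flip ρ.flip Finv

/-- The deformed right action `v ⋆ a = (f̄ᵅ▷v)·(f̄_ᵅ▷a)`. -/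
noncomputable def rstar (act : H →ₗ[K] A →ₗ[K] A) (r : A →ₗ[K] V →ₗ[K] V)
    (ρ : H →ₗ[K] V →ₗ[K] V) (Finv : H ⊗[K] H) : V →ₗ[K] A →ₗ[K] V :=
  sw r.flip ρ.flip act.flip Finv

section Aux
variable {Kc : Type*} [CommRing Kc] {Hc M N P X Y W : Type*}
    [AddCommGroup Hc] [Module Kc Hc] [AddCommGroup M] [Module Kc M] [AddCommGroup N] [Module Kc N]
    [AddCommGroup P] [Module Kc P] [AddCommGroup X] [Module Kc X] [AddCommGroup Y] [Module Kc Y]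
    [AddCommGroup W] [Module Kc W]

@[simp] lemma sw_tmul (B : M →ₗ[Kc] N →ₗ[Kc] P) (F : X →ₗ[Kc] Hc →ₗ[Kc] M)
    (G : Y →ₗ[Kc] Hc →ₗ[Kc] N) (η ζ : Hc) (x : X) (y : Y) :
    sw B F G (η ⊗ₜ[Kc] ζ) x y = B (F x η) (G y ζ) := by
  simp [sw]

@[simp] lemma sw_zero (B : M →ₗ[Kc] N →ₗ[Kc] P) (F : X →ₗ[Kc] Hc →ₗ[Kc] M)
    (G : Y →ₗ[Kc] Hc →ₗ[Kc] N) (x : X) (y : Y) :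
    sw B F G (0 : Hc ⊗[Kc] Hc) x y = 0 := by
  simp [sw]

lemma sw_add (B : M →ₗ[Kc] N →ₗ[Kc] P) (F : X →ₗ[Kc] Hc →ₗ[Kc] M)
    (G : Y →ₗ[Kc] Hc →ₗ[Kc] N) (t t' : Hc ⊗[Kc] Hc) (x : X) (y : Y) :
    sw B F G (t + t') x y = sw B F G t x y + sw B F G t' x y := by
  simp [sw]

/-- lift of a trilinear map to `Hc ⊗ (Hc ⊗ Hc)`. -/
noncomputable def trilift (T : Hc →ₗ[Kc] Hc →ₗ[Kc] Hc →ₗ[Kc] W) : Hc ⊗[Kc] (Hc ⊗[Kc] Hc) →ₗ[Kc] W :=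
  TensorProduct.lift ((TensorProduct.lift.equiv (RingHom.id Kc) Hc Hc W).toLinearMap ∘ₗ T)

@[simp] lemma trilift_tmul (T : Hc →ₗ[Kc] Hc →ₗ[Kc] Hc →ₗ[Kc] W) (ξ η ζ : Hc) :
    trilift T (ξ ⊗ₜ[Kc] (η ⊗ₜ[Kc] ζ)) = T ξ η ζ := by
  simp [trilift, TensorProduct.lift.equiv]

variable {Vc : Type*} [AddCommGroup Vc] [Module Kc Vc]

noncomputable def nest1 (f g : Hc →ₗ[Kc] Vc →ₗ[Kc] Vc) (h : Hc →ₗ[Kc] Vc) :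
    Hc →ₗ[Kc] Hc →ₗ[Kc] Hc →ₗ[Kc] Vc :=
  LinearMap.mk₂ Kc (fun ξ η => f ξ ∘ₗ g η ∘ₗ h)
    (fun ξ ξ' η => by simp [map_add, LinearMap.add_comp])
    (fun c ξ η => by simp [map_smul, LinearMap.smul_comp])
    (fun ξ η η' => by simp [map_add, LinearMap.add_comp, LinearMap.comp_add])
    (fun c ξ η => by simp [map_smul, LinearMap.smul_comp, LinearMap.comp_smul])

@[simp] lemma nest1_apply (f g : Hc →ₗ[Kc] Vc →ₗ[Kc] Vc) (h : Hc →ₗ[Kc] Vc) (ξ η ζ : Hc) :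
    nest1 f g h ξ η ζ = f ξ (g η (h ζ)) := rfl

noncomputable def nest2 (f g : Hc →ₗ[Kc] Vc →ₗ[Kc] Vc) (h : Hc →ₗ[Kc] Vc) :
    Hc →ₗ[Kc] Hc →ₗ[Kc] Hc →ₗ[Kc] Vc :=
  LinearMap.mk₂ Kc (fun ξ η => f ξ ∘ₗ g.flip (h η))
    (fun ξ ξ' η => by simp [map_add, LinearMap.add_comp])
    (fun c ξ η => by simp [map_smul, LinearMap.smul_comp])
    (fun ξ η η' => by simp [map_add, LinearMap.add_comp, LinearMap.comp_add])
    (fun c ξ η => by simp [map_smul, LinearMap.smul_comp, LinearMap.comp_smul])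

@[simp] lemma nest2_apply (f g : Hc →ₗ[Kc] Vc →ₗ[Kc] Vc) (h : Hc →ₗ[Kc] Vc) (ξ η ζ : Hc) :
    nest2 f g h ξ η ζ = f ξ (g ζ (h η)) := rfl

noncomputable def nest3 (f g : Hc →ₗ[Kc] Vc →ₗ[Kc] Vc) (h : Hc →ₗ[Kc] Vc) :
    Hc →ₗ[Kc] Hc →ₗ[Kc] Hc →ₗ[Kc] Vc :=
  LinearMap.mk₂ Kc (fun ξ η => f.flip (g η (h ξ)))
    (fun ξ ξ' η => by simp [map_add])
    (fun c ξ η => by simp [map_smul])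
    (fun ξ η η' => by simp [map_add])
    (fun c ξ η => by simp [map_smul])

@[simp] lemma nest3_apply (f g : Hc →ₗ[Kc] Vc →ₗ[Kc] Vc) (h : Hc →ₗ[Kc] Vc) (ξ η ζ : Hc) :
    nest3 f g h ξ η ζ = f ζ (g η (h ξ)) := rfl

end Aux

variable {Kc : Type*} [CommRing Kc] {Hc : Type*} [Ring Hc] [HopfAlgebra Kc Hc]

lemma mapDl_mul (x y : Hc ⊗[Kc] Hc) :
    TensorProduct.map (Coalgebra.comul (R := Kc)) LinearMap.id (x * y)
      = TensorProduct.map (Coalgebra.comul (R := Kc)) LinearMap.id x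
        * TensorProduct.map (Coalgebra.comul (R := Kc)) LinearMap.id y := by
  have h : TensorProduct.map (Coalgebra.comul (R := Kc)) (LinearMap.id (M := Hc))
      = (Algebra.TensorProduct.map (Bialgebra.comulAlgHom Kc Hc) (AlgHom.id Kc Hc)).toLinearMap := by
    apply TensorProduct.ext'
    intro a b
    simp [Algebra.TensorProduct.map_tmul]
  rw [h]
  simp only [AlgHom.toLinearMap_apply]
  exact map_mul _ x y

lemma mapDr_mul (x y : Hc ⊗[Kc] Hc) :
    TensorProduct.map LinearMap.id (Coalgebra.comul (R := Kc)) (x * y)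
      = TensorProduct.map LinearMap.id (Coalgebra.comul (R := Kc)) x
        * TensorProduct.map LinearMap.id (Coalgebra.comul (R := Kc)) y := by
  have h : TensorProduct.map (LinearMap.id (M := Hc)) (Coalgebra.comul (R := Kc))
      = (Algebra.TensorProduct.map (AlgHom.id Kc Hc) (Bialgebra.comulAlgHom Kc Hc)).toLinearMap := by
    apply TensorProduct.ext'
    intro a b
    simp [Algebra.TensorProduct.map_tmul]
  rw [h]
  simp only [AlgHom.toLinearMap_apply]
  exact map_mul _ x y

lemma mapDl_one :
    TensorProduct.map (Coalgebra.comul (R := Kc)) LinearMap.id (1 : Hc ⊗[Kc] Hc) = 1 := by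
  have : (1 : Hc ⊗[Kc] Hc) = (1 : Hc) ⊗ₜ[Kc] (1 : Hc) := rfl
  rw [this, TensorProduct.map_tmul]
  simp [Algebra.TensorProduct.one_def]

lemma mapDr_one :
    TensorProduct.map LinearMap.id (Coalgebra.comul (R := Kc)) (1 : Hc ⊗[Kc] Hc) = 1 := by
  have : (1 : Hc ⊗[Kc] Hc) = (1 : Hc) ⊗ₜ[Kc] (1 : Hc) := rfl
  rw [this, TensorProduct.map_tmul]
  simp [Algebra.TensorProduct.one_def]

lemma twist_inv_cocycle (F Finv : Hc ⊗[Kc] Hc) (hF : F * Finv = 1) (hF' : Finv * F = 1)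
    (htw1 : (Algebra.TensorProduct.assoc Kc Kc Kc Hc Hc Hc (F ⊗ₜ[Kc] (1:Hc)))
        * (Algebra.TensorProduct.assoc Kc Kc Kc Hc Hc Hc
            (TensorProduct.map (Coalgebra.comul (R := Kc)) LinearMap.id F))
      = ((1:Hc) ⊗ₜ[Kc] F) * (TensorProduct.map LinearMap.id (Coalgebra.comul (R := Kc)) F)) :
    Algebra.TensorProduct.assoc Kc Kc Kc Hc Hc Hc
        ((TensorProduct.map (Coalgebra.comul (R := Kc)) LinearMap.id Finv) * (Finv ⊗ₜ[Kc] (1:Hc)))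
      = (TensorProduct.map LinearMap.id (Coalgebra.comul (R := Kc)) Finv)
        * ((1:Hc) ⊗ₜ[Kc] Finv) := by
  set A3 := Algebra.TensorProduct.assoc Kc Kc Kc Hc Hc Hc
  set p := A3 (F ⊗ₜ[Kc] (1:Hc)) with hp
  set q := A3 (TensorProduct.map (Coalgebra.comul (R := Kc)) LinearMap.id F) with hq
  set p' := A3 (Finv ⊗ₜ[Kc] (1:Hc)) with hp'
  set q' := A3 (TensorProduct.map (Coalgebra.comul (R := Kc)) LinearMap.id Finv) with hq'
  set R := ((1:Hc) ⊗ₜ[Kc] F : Hc ⊗[Kc] (Hc ⊗[Kc] Hc)) with hR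
  set S := (TensorProduct.map LinearMap.id (Coalgebra.comul (R := Kc)) F : Hc ⊗[Kc] (Hc ⊗[Kc] Hc)) with hS
  set R' := ((1:Hc) ⊗ₜ[Kc] Finv : Hc ⊗[Kc] (Hc ⊗[Kc] Hc)) with hR'
  set S' := (TensorProduct.map LinearMap.id (Coalgebra.comul (R := Kc)) Finv
      : Hc ⊗[Kc] (Hc ⊗[Kc] Hc)) with hS'
  have h1 : p' * p = 1 := by
    rw [hp, hp', ← map_mul, Algebra.TensorProduct.tmul_mul_tmul, hF', one_mul]
    rw [show ((1:Hc⊗[Kc]Hc) ⊗ₜ[Kc] (1:Hc)) = (1 : (Hc ⊗[Kc] Hc) ⊗[Kc] Hc) from rfl, map_one]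
  have h2 : q' * q = 1 := by
    rw [hq, hq', ← map_mul, ← mapDl_mul, hF', mapDl_one, map_one]
  have h3 : S * S' = 1 := by rw [hS, hS', ← mapDr_mul, hF, mapDr_one]
  have h4 : R * R' = 1 := by
    rw [hR, hR', Algebra.TensorProduct.tmul_mul_tmul, hF, one_mul]
    rfl
  rw [map_mul]
  calc q' * p' = q' * p' * (R * (S * (S' * R'))) := by
        rw [← mul_assoc S, h3, one_mul, h4, mul_one]
    _ = q' * p' * ((R * S) * (S' * R')) := by rw [mul_assoc R S]
    _ = q' * p' * ((p * q) * (S' * R')) := by rw [htw1]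
    _ = q' * ((p' * p) * (q * (S' * R'))) := by simp only [mul_assoc]
    _ = q' * (q * (S' * R')) := by rw [h1, one_mul]
    _ = (q' * q) * (S' * R') := by rw [← mul_assoc]
    _ = S' * R' := by rw [h2, one_mul]

section Claims
variable {Kc : Type*} [CommRing Kc] {Hc : Type*} [Ring Hc] [HopfAlgebra Kc Hc]
variable {Ac : Type*} [Ring Ac] [Algebra Kc Ac]
variable {Vc : Type*} [AddCommGroup Vc] [Module Kc Vc]
variable (act : Hc →ₗ[Kc] Ac →ₗ[Kc] Ac) (l r : Ac →ₗ[Kc] Vc →ₗ[Kc] Vc) (ρ : Hc →ₗ[Kc] Vc →ₗ[Kc] Vc)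

lemma claimA2
    (hact_mul : ∀ ξ ζ : Hc, act (ξ * ζ) = act ξ ∘ₗ act ζ)
    (hρ_mul : ∀ ξ ζ : Hc, ρ (ξ * ζ) = ρ ξ ∘ₗ ρ ζ)
    (hρl : ∀ (ξ : Hc) (a : Ac) (v : Vc),
      ρ ξ (l a v) = sw l act.flip ρ.flip (Coalgebra.comul (R := Kc) ξ) a v)
    (a b : Ac) (v : Vc) (t s : Hc ⊗[Kc] Hc) :
    sw l act.flip ρ.flip t a (sw l act.flip ρ.flip s b v)
      = trilift (nest1 (l ∘ₗ act.flip a) (l ∘ₗ act.flip b) (ρ.flip v))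
          ((TensorProduct.map LinearMap.id (Coalgebra.comul (R := Kc)) t)
            * ((1:Hc) ⊗ₜ[Kc] s)) := by
  induction t using TensorProduct.induction_on with
  | zero => simp
  | add u w hu hw =>
      simp only [sw_add, map_add, add_mul] at *
      rw [hu, hw]
  | tmul ξ η =>
      induction s using TensorProduct.induction_on with
      | zero => simp
      | add u w hu hw =>
          simp only [sw_add, map_add, tmul_add, mul_add] at *
          rw [hu, hw]
      | tmul α β =>
          simp only [sw_tmul, flip_apply, TensorProduct.map_tmul, id_coe, id_eq]
          rw [hρl, Algebra.TensorProduct.tmul_mul_tmul]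
          generalize Coalgebra.comul (R := Kc) η = u
          induction u using TensorProduct.induction_on with
          | zero => simp
          | add u w hu hw =>
              simp only [sw_add, map_add, add_mul, tmul_add] at *
              rw [hu, hw]
          | tmul η₁ η₂ =>
              simp [Algebra.TensorProduct.tmul_mul_tmul, hact_mul, hρ_mul]

lemma claimB2
    (hact_mul : ∀ ξ ζ : Hc, act (ξ * ζ) = act ξ ∘ₗ act ζ)
    (hact_prod : ∀ (ξ : Hc) (a b : Ac),
      act ξ (a * b)
        = sw (LinearMap.mul Kc Ac) act.flip act.flip (Coalgebra.comul (R := Kc) ξ) a b)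
    (hρ_mul : ∀ ξ ζ : Hc, ρ (ξ * ζ) = ρ ξ ∘ₗ ρ ζ)
    (hl_mul : ∀ a b : Ac, l (a * b) = l a ∘ₗ l b)
    (a b : Ac) (v : Vc) (t s : Hc ⊗[Kc] Hc) :
    sw l act.flip ρ.flip t (sw (LinearMap.mul Kc Ac) act.flip act.flip s a b) v
      = trilift (nest1 (l ∘ₗ act.flip a) (l ∘ₗ act.flip b) (ρ.flip v))
          (Algebra.TensorProduct.assoc Kc Kc Kc Hc Hc Hc
            ((TensorProduct.map (Coalgebra.comul (R := Kc)) LinearMap.id t)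
              * (s ⊗ₜ[Kc] (1:Hc)))) := by
  induction t using TensorProduct.induction_on with
  | zero => simp
  | add u w hu hw =>
      simp only [sw_add, map_add, add_mul] at *
      rw [hu, hw]
  | tmul α β =>
      induction s using TensorProduct.induction_on with
      | zero => simp
      | add u w hu hw =>
          simp only [sw_add, map_add, add_tmul, mul_add, LinearMap.add_apply] at *
          rw [hu, hw]
      | tmul ξ η =>
          simp only [sw_tmul, flip_apply, TensorProduct.map_tmul, id_coe, id_eq,
            LinearMap.mul_apply']
          rw [hact_prod, Algebra.TensorProduct.tmul_mul_tmul]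
          generalize Coalgebra.comul (R := Kc) α = u
          induction u using TensorProduct.induction_on with
          | zero => simp
          | add u w hu hw =>
              simp only [sw_add, map_add, LinearMap.add_apply, add_mul, add_tmul] at *
              rw [hu, hw]
          | tmul α₁ α₂ =>
              simp [Algebra.TensorProduct.tmul_mul_tmul, Algebra.TensorProduct.assoc_tmul,
                hact_mul, hρ_mul, hl_mul]

lemma claimA1
    (hact_mul : ∀ ξ ζ : Hc, act (ξ * ζ) = act ξ ∘ₗ act ζ)
    (hρ_mul : ∀ ξ ζ : Hc, ρ (ξ * ζ) = ρ ξ ∘ₗ ρ ζ)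
    (hρr : ∀ (ξ : Hc) (a : Ac) (v : Vc),
      ρ ξ (r a v) = sw r.flip ρ.flip act.flip (Coalgebra.comul (R := Kc) ξ) v a)
    (a b : Ac) (v : Vc) (t s : Hc ⊗[Kc] Hc) :
    sw l act.flip ρ.flip t a (sw r.flip ρ.flip act.flip s v b)
      = trilift (nest2 (l ∘ₗ act.flip a) (r ∘ₗ act.flip b) (ρ.flip v))
          ((TensorProduct.map LinearMap.id (Coalgebra.comul (R := Kc)) t)
            * ((1:Hc) ⊗ₜ[Kc] s)) := by
  induction t using TensorProduct.induction_on with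
  | zero => simp
  | add u w hu hw =>
      simp only [sw_add, map_add, add_mul] at *
      rw [hu, hw]
  | tmul ξ η =>
      induction s using TensorProduct.induction_on with
      | zero => simp
      | add u w hu hw =>
          simp only [sw_add, map_add, tmul_add, mul_add] at *
          rw [hu, hw]
      | tmul α β =>
          simp only [sw_tmul, flip_apply, TensorProduct.map_tmul, id_coe, id_eq]
          rw [hρr, Algebra.TensorProduct.tmul_mul_tmul]
          generalize Coalgebra.comul (R := Kc) η = u
          induction u using TensorProduct.induction_on with
          | zero => simp
          | add u w hu hw =>
              simp only [sw_add, map_add, add_mul, tmul_add] at *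
              rw [hu, hw]
          | tmul η₁ η₂ =>
              simp [Algebra.TensorProduct.tmul_mul_tmul, hact_mul, hρ_mul]

lemma claimB1
    (hact_mul : ∀ ξ ζ : Hc, act (ξ * ζ) = act ξ ∘ₗ act ζ)
    (hρ_mul : ∀ ξ ζ : Hc, ρ (ξ * ζ) = ρ ξ ∘ₗ ρ ζ)
    (hlr : ∀ a b : Ac, l a ∘ₗ r b = r b ∘ₗ l a)
    (hρl : ∀ (ξ : Hc) (a : Ac) (v : Vc),
      ρ ξ (l a v) = sw l act.flip ρ.flip (Coalgebra.comul (R := Kc) ξ) a v)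
    (a b : Ac) (v : Vc) (t s : Hc ⊗[Kc] Hc) :
    sw r.flip ρ.flip act.flip t (sw l act.flip ρ.flip s a v) b
      = trilift (nest2 (l ∘ₗ act.flip a) (r ∘ₗ act.flip b) (ρ.flip v))
          (Algebra.TensorProduct.assoc Kc Kc Kc Hc Hc Hc
            ((TensorProduct.map (Coalgebra.comul (R := Kc)) LinearMap.id t)
              * (s ⊗ₜ[Kc] (1:Hc)))) := by
  induction t using TensorProduct.induction_on with
  | zero => simp
  | add u w hu hw =>
      simp only [sw_add, map_add, add_mul] at *
      rw [hu, hw]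
  | tmul ξ η =>
      induction s using TensorProduct.induction_on with
      | zero => simp
      | add u w hu hw =>
          simp only [sw_add, map_add, add_tmul, mul_add, LinearMap.add_apply] at *
          rw [hu, hw]
      | tmul α β =>
          simp only [sw_tmul, flip_apply, TensorProduct.map_tmul, id_coe, id_eq]
          rw [hρl, Algebra.TensorProduct.tmul_mul_tmul]
          generalize Coalgebra.comul (R := Kc) ξ = u
          induction u using TensorProduct.induction_on with
          | zero => simp
          | add u w hu hw =>
              simp only [sw_add, map_add, add_mul, add_tmul, LinearMap.add_apply] at *
              rw [hu, hw]
          | tmul ξ₁ ξ₂ =>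
              have hswap : ∀ (x : Ac) (w : Vc), r (act η b) (l x w) = l x (r (act η b) w) := by
                intro x w
                have := congrArg (fun f => f w) (hlr x (act η b))
                simpa using this.symm
              simp [Algebra.TensorProduct.tmul_mul_tmul, Algebra.TensorProduct.assoc_tmul,
                hact_mul, hρ_mul, hswap]

lemma claimA3
    (hact_mul : ∀ ξ ζ : Hc, act (ξ * ζ) = act ξ ∘ₗ act ζ)
    (hact_prod : ∀ (ξ : Hc) (a b : Ac),
      act ξ (a * b)
        = sw (LinearMap.mul Kc Ac) act.flip act.flip (Coalgebra.comul (R := Kc) ξ) a b)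
    (hr_mul : ∀ a b : Ac, r (a * b) = r b ∘ₗ r a)
    (a b : Ac) (v : Vc) (t s : Hc ⊗[Kc] Hc) :
    sw r.flip ρ.flip act.flip t v (sw (LinearMap.mul Kc Ac) act.flip act.flip s a b)
      = trilift (nest3 (r ∘ₗ act.flip b) (r ∘ₗ act.flip a) (ρ.flip v))
          ((TensorProduct.map LinearMap.id (Coalgebra.comul (R := Kc)) t)
            * ((1:Hc) ⊗ₜ[Kc] s)) := by
  induction t using TensorProduct.induction_on with
  | zero => simp
  | add u w hu hw =>
      simp only [sw_add, map_add, add_mul] at *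
      rw [hu, hw]
  | tmul ξ η =>
      induction s using TensorProduct.induction_on with
      | zero => simp
      | add u w hu hw =>
          simp only [sw_add, map_add, tmul_add, mul_add] at *
          rw [hu, hw]
      | tmul α β =>
          simp only [sw_tmul, flip_apply, TensorProduct.map_tmul, id_coe, id_eq,
            LinearMap.mul_apply']
          rw [hact_prod, Algebra.TensorProduct.tmul_mul_tmul]
          generalize Coalgebra.comul (R := Kc) η = u
          induction u using TensorProduct.induction_on with
          | zero => simp
          | add u w hu hw =>
              simp only [sw_add, map_add, add_mul, tmul_add, LinearMap.add_apply] at *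
              rw [hu, hw]
          | tmul η₁ η₂ =>
              have hrm : ∀ (x y : Ac) (w : Vc), r (x * y) w = r y (r x w) := by
                intro x y w
                rw [hr_mul]; rfl
              simp [Algebra.TensorProduct.tmul_mul_tmul, hact_mul, hrm]

lemma claimB3
    (hact_mul : ∀ ξ ζ : Hc, act (ξ * ζ) = act ξ ∘ₗ act ζ)
    (hρ_mul : ∀ ξ ζ : Hc, ρ (ξ * ζ) = ρ ξ ∘ₗ ρ ζ)
    (hρr : ∀ (ξ : Hc) (a : Ac) (v : Vc),
      ρ ξ (r a v) = sw r.flip ρ.flip act.flip (Coalgebra.comul (R := Kc) ξ) v a)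
    (a b : Ac) (v : Vc) (t s : Hc ⊗[Kc] Hc) :
    sw r.flip ρ.flip act.flip t (sw r.flip ρ.flip act.flip s v a) b
      = trilift (nest3 (r ∘ₗ act.flip b) (r ∘ₗ act.flip a) (ρ.flip v))
          (Algebra.TensorProduct.assoc Kc Kc Kc Hc Hc Hc
            ((TensorProduct.map (Coalgebra.comul (R := Kc)) LinearMap.id t)
              * (s ⊗ₜ[Kc] (1:Hc)))) := by
  induction t using TensorProduct.induction_on with
  | zero => simp
  | add u w hu hw =>
      simp only [sw_add, map_add, add_mul] at *
      rw [hu, hw]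
  | tmul ξ η =>
      induction s using TensorProduct.induction_on with
      | zero => simp
      | add u w hu hw =>
          simp only [sw_add, map_add, add_tmul, mul_add, LinearMap.add_apply] at *
          rw [hu, hw]
      | tmul α β =>
          simp only [sw_tmul, flip_apply, TensorProduct.map_tmul, id_coe, id_eq]
          rw [hρr, Algebra.TensorProduct.tmul_mul_tmul]
          generalize Coalgebra.comul (R := Kc) ξ = u
          induction u using TensorProduct.induction_on with
          | zero => simp
          | add u w hu hw =>
              simp only [sw_add, map_add, add_mul, add_tmul, LinearMap.add_apply] at *
              rw [hu, hw]
          | tmul ξ₁ ξ₂ =>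
              simp [Algebra.TensorProduct.tmul_mul_tmul, Algebra.TensorProduct.assoc_tmul,
                hact_mul, hρ_mul]

end Claims

/-- the deformed module `V_⋆` with actions `a⋆v = (f̄ᵅ▷a)·(f̄_ᵅ▷v)` and
`v⋆a = (f̄ᵅ▷v)·(f̄_ᵅ▷a)` is an `A_⋆`-bimodule: `(a⋆v)⋆b = a⋆(v⋆b)`, `a⋆(b⋆v) = (a⋆b)⋆v`
and `(v⋆a)⋆b = v⋆(a⋆b)`. -/
theorem deformed_bimodule (act : H →ₗ[K] A →ₗ[K] A) (hMA : IsModuleAlgebra K H A act)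
    (l r : A →ₗ[K] V →ₗ[K] V) (ρ : H →ₗ[K] V →ₗ[K] V)
    (hV : IsHModuleBimodule K H A V act l r ρ)
    (F Finv : H ⊗[K] H) (hF : F * Finv = 1) (hF' : Finv * F = 1)
    (htw : IsTwist K H (Coalgebra.comul (R := K)) (Coalgebra.counit (R := K)) F) :
    ∀ (a b : A) (v : V),
      rstar K H A V act r ρ Finv (lstar K H A V act l ρ Finv a v) b
        = lstar K H A V act l ρ Finv a (rstar K H A V act r ρ Finv v b)
      ∧ lstar K H A V act l ρ Finv a (lstar K H A V act l ρ Finv b v)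
        = lstar K H A V act l ρ Finv (starBil K H A act Finv a b) v
      ∧ rstar K H A V act r ρ Finv (rstar K H A V act r ρ Finv v a) b
        = rstar K H A V act r ρ Finv v (starBil K H A act Finv a b) := by
  unfold IsModuleAlgebra at hMA
  unfold IsHModuleBimodule at hV
  unfold IsTwist at htw
  obtain ⟨hact_mul, hact_one, hact_prod, hact_unit⟩ := hMA
  obtain ⟨hl_mul, hl_one, hr_mul, hr_one, hlr, hρ_mul, hρ_one, hρl, hρr⟩ := hV
  have hcoc := twist_inv_cocycle F Finv hF hF' htw.1
  intro a b v
  unfold lstar rstar starBil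
  refine ⟨?_, ?_, ?_⟩
  · rw [claimB1 act l r ρ hact_mul hρ_mul hlr hρl a b v Finv Finv,
        claimA1 act l r ρ hact_mul hρ_mul hρr a b v Finv Finv, hcoc]
  · rw [claimA2 act l ρ hact_mul hρ_mul hρl a b v Finv Finv,
        claimB2 act l ρ hact_mul hact_prod hρ_mul hl_mul a b v Finv Finv, hcoc]
  · rw [claimB3 act r ρ hact_mul hρ_mul hρr a b v Finv Finv,
        claimA3 act r ρ hact_mul hact_prod hr_mul a b v Finv Finv, hcoc]
end
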